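/- Classroom teaching contraction: let w_1^t, …, w_N^t, w* ∈ ℝ^d, α_j^t = η_jγ_t²(2 - η_jγ_t²) ≥ α_min > 0, W^t = (1/N)∑_j α_j^t (w_j^t - w*)(w_j^t - w*)ᵀ with rank(W^t) ≤ k, and let x̂^t be a unit top eigenvector of W^t. If each learner updates w_j^{t+1} = w_j^t - η_jγ_t²⟨w_j^t - w*, x̂^t⟩x̂^t, then (1/N)∑_j ‖w_j^{t+1} - w*‖² ≤ (1 - α_min/k)·(1/N)∑_j ‖w_j^t - w*‖². -/

import Mathlib

open Matrix

lemma vecMulVec_mulVec' {d : ℕ} (u u' x : Fin d → ℝ) :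
    (Matrix.vecMulVec u u') *ᵥ x = (u' ⬝ᵥ x) • u := by
  ext i
  simp only [Matrix.mulVec, Matrix.vecMulVec_apply, dotProduct, Pi.smul_apply,
    smul_eq_mul, Finset.sum_mul]
  exact Finset.sum_congr rfl fun l _ => by ring

lemma sum_mulVec' {d N : ℕ} (f : Fin N → Matrix (Fin d) (Fin d) ℝ) (x : Fin d → ℝ) :
    (∑ j, f j) *ᵥ x = ∑ j, f j *ᵥ x := by
  ext i
  simp only [Matrix.mulVec, dotProduct, Finset.sum_apply, Matrix.sum_apply,
    Finset.sum_mul]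
  exact Finset.sum_comm

lemma dotProduct_sum' {d N : ℕ} (x : Fin d → ℝ) (g : Fin N → Fin d → ℝ) :
    x ⬝ᵥ (∑ j, g j) = ∑ j, x ⬝ᵥ g j := by
  simp only [dotProduct, Finset.sum_apply, Finset.mul_sum]
  exact Finset.sum_comm

lemma trace_vecMulVec' {d : ℕ} (u u' : Fin d → ℝ) :
    (Matrix.vecMulVec u u').trace = u ⬝ᵥ u' := by
  simp [Matrix.trace, Matrix.vecMulVec_apply, dotProduct, Matrix.diag]

theorem classroom_teaching_contraction
    (d N : ℕ) (hd : 0 < d) (hN : 0 < N)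
    (w w' : Fin N → (Fin d → ℝ)) (wstar : Fin d → ℝ)
    (η : Fin N → ℝ) (hη : ∀ j, 0 < η j) (γ : ℝ) (hγ : 0 < γ)
    (α : Fin N → ℝ) (hα : ∀ j, α j = η j * γ ^ 2 * (2 - η j * γ ^ 2))
    (αmin : ℝ) (hαmin : 0 < αmin) (hαminle : ∀ j, αmin ≤ α j)
    (W : Matrix (Fin d) (Fin d) ℝ)
    (hW : W = (1 / (N : ℝ)) •
        ∑ j, α j • Matrix.vecMulVec (w j - wstar) (w j - wstar))
    (k : ℕ) (hk0 : 0 < k) (hrank : W.rank ≤ k)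
    (xhat : Fin d → ℝ) (hxhat : xhat ⬝ᵥ xhat = 1)
    (hmax : ∀ x : Fin d → ℝ, x ⬝ᵥ x = 1 → x ⬝ᵥ (W *ᵥ x) ≤ xhat ⬝ᵥ (W *ᵥ xhat))
    (hupd : ∀ j, w' j = w j - (η j * γ ^ 2 * ((w j - wstar) ⬝ᵥ xhat)) • xhat) :
    (1 / (N : ℝ)) * ∑ j, (w' j - wstar) ⬝ᵥ (w' j - wstar) ≤
      (1 - αmin / k) * ((1 / (N : ℝ)) * ∑ j, (w j - wstar) ⬝ᵥ (w j - wstar)) := by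
  classical
  have hNpos : (0 : ℝ) < N := by exact_mod_cast hN
  have hkpos : (0 : ℝ) < k := by exact_mod_cast hk0
  set v : Fin N → (Fin d → ℝ) := fun j => w j - wstar with hv
  -- quadratic form of W
  have hquad : ∀ x : Fin d → ℝ,
      x ⬝ᵥ (W *ᵥ x) = (1 / (N : ℝ)) * ∑ j, α j * (v j ⬝ᵥ x) ^ 2 := by
    intro x
    rw [hW, smul_mulVec, dotProduct_smul, sum_mulVec', dotProduct_sum']
    rw [smul_eq_mul]
    congr 1
    refine Finset.sum_congr rfl fun j _ => ?_
    rw [smul_mulVec, dotProduct_smul, vecMulVec_mulVec', dotProduct_smul]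
    rw [dotProduct_comm x (v j)]
    simp only [smul_eq_mul]
    ring
  -- per-learner contraction identity
  have hid : ∀ j, (w' j - wstar) ⬝ᵥ (w' j - wstar)
      = v j ⬝ᵥ v j - α j * (v j ⬝ᵥ xhat) ^ 2 := by
    intro j
    have h1 : w' j - wstar = v j - (η j * γ ^ 2 * (v j ⬝ᵥ xhat)) • xhat := by
      rw [hupd j]; simp only [hv]; abel
    rw [h1, hα j]
    simp only [sub_dotProduct, dotProduct_sub, smul_dotProduct,
      dotProduct_smul, smul_eq_mul, hxhat]
    rw [dotProduct_comm xhat (v j)]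
    ring
  -- W is Hermitian
  have hherm : W.IsHermitian := by
    unfold Matrix.IsHermitian
    ext i l
    rw [hW]
    simp [Matrix.conjTranspose_apply, Matrix.sum_apply, Matrix.vecMulVec_apply, mul_comm]
  -- trace of W
  have htrace : W.trace = (1 / (N : ℝ)) * ∑ j, α j * (v j ⬝ᵥ v j) := by
    rw [hW, Matrix.trace_smul, Matrix.trace_sum]
    simp only [Matrix.trace_smul, trace_vecMulVec', smul_eq_mul]
    rfl
  set lam : ℝ := xhat ⬝ᵥ (W *ᵥ xhat) with hlam
  have hα0 : ∀ j, (0:ℝ) ≤ α j := fun j => le_trans hαmin.le (hαminle j)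
  have hlam0 : 0 ≤ lam := by
    rw [hlam, hquad]
    apply mul_nonneg (by positivity)
    exact Finset.sum_nonneg fun j _ => mul_nonneg (hα0 j) (sq_nonneg _)
  -- eigenvectors are unit
  have hdot_eig : ∀ i, (hherm.eigenvectorBasis i : Fin d → ℝ) ⬝ᵥ
      (hherm.eigenvectorBasis i : Fin d → ℝ) = 1 := by
    intro i
    have hnorm := hherm.eigenvectorBasis.orthonormal.1 i
    have h2 : (inner ℝ (hherm.eigenvectorBasis i) (hherm.eigenvectorBasis i) : ℝ) = 1 := by
      rw [real_inner_self_eq_norm_sq, hnorm]; norm_num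
    simp only [PiLp.inner_apply, RCLike.inner_apply, conj_trivial] at h2
    simpa only [dotProduct, mul_comm] using h2
  -- every eigenvalue is at most lam
  have heig_le : ∀ i, hherm.eigenvalues i ≤ lam := by
    intro i
    have h1 := hherm.mulVec_eigenvectorBasis i
    have hd1 : ⇑(hherm.eigenvectorBasis i) ⬝ᵥ ⇑(hherm.eigenvectorBasis i) = (1:ℝ) :=
      hdot_eig i
    have h2 : ⇑(hherm.eigenvectorBasis i) ⬝ᵥ (W *ᵥ ⇑(hherm.eigenvectorBasis i)) ≤ lam :=
      hmax _ (hdot_eig i)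
    rwa [h1, dotProduct_smul, hd1, smul_eq_mul, mul_one] at h2
  -- trace equals sum of eigenvalues
  have htr_eq : W.trace = ∑ i, hherm.eigenvalues i := by
    conv_lhs => rw [hherm.spectral_theorem, Unitary.conjStarAlgAut_apply]
    rw [Matrix.trace_mul_cycle]
    rw [show star (hherm.eigenvectorUnitary : Matrix (Fin d) (Fin d) ℝ) *
        (hherm.eigenvectorUnitary : Matrix (Fin d) (Fin d) ℝ) = 1 from
      Unitary.coe_star_mul_self _]
    rw [Matrix.one_mul, Matrix.trace_diagonal]
    simp
  -- trace ≤ k * lam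
  have htr_le : W.trace ≤ (k : ℝ) * lam := by
    rw [htr_eq]
    have h1 : ∑ i, hherm.eigenvalues i
        = ∑ i ∈ Finset.univ.filter (fun i => hherm.eigenvalues i ≠ 0),
            hherm.eigenvalues i := by
      rw [Finset.sum_filter_of_ne]
      intro x _ hx; exact hx
    rw [h1]
    calc ∑ i ∈ Finset.univ.filter (fun i => hherm.eigenvalues i ≠ 0), hherm.eigenvalues i
        ≤ ∑ _i ∈ Finset.univ.filter (fun i => hherm.eigenvalues i ≠ 0), lam :=
          Finset.sum_le_sum fun i _ => heig_le i
      _ = ((Finset.univ.filter (fun i => hherm.eigenvalues i ≠ 0)).card : ℝ) * lam := by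
          rw [Finset.sum_const, nsmul_eq_mul]
      _ ≤ (k : ℝ) * lam := by
          apply mul_le_mul_of_nonneg_right _ hlam0
          have hcard : (Finset.univ.filter (fun i => hherm.eigenvalues i ≠ 0)).card
              = Fintype.card {i // hherm.eigenvalues i ≠ 0} := (Fintype.card_subtype _).symm
          have := hherm.rank_eq_card_non_zero_eigs
          rw [hcard, ← this]
          exact_mod_cast hrank
  -- nonnegativity of squared norms
  have hvv0 : ∀ j, (0:ℝ) ≤ v j ⬝ᵥ v j := by
    intro j
    simpa [dotProduct] using
      Finset.sum_nonneg (fun i (_ : i ∈ Finset.univ) => mul_self_nonneg (v j i))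
  -- trace lower bound
  have htr_ge : αmin * ((1 / (N : ℝ)) * ∑ j, v j ⬝ᵥ v j) ≤ W.trace := by
    rw [htrace]
    rw [← mul_assoc, mul_comm αmin (1 / (N:ℝ)), mul_assoc]
    apply mul_le_mul_of_nonneg_left _ (by positivity)
    rw [Finset.mul_sum]
    exact Finset.sum_le_sum fun j _ =>
      mul_le_mul_of_nonneg_right (hαminle j) (hvv0 j)
  -- put everything together
  have hLHS : (1 / (N : ℝ)) * ∑ j, (w' j - wstar) ⬝ᵥ (w' j - wstar)
      = (1 / (N : ℝ)) * ∑ j, v j ⬝ᵥ v j - lam := by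
    rw [hlam, hquad]
    rw [Finset.sum_congr rfl fun j _ => hid j, Finset.sum_sub_distrib]
    ring
  rw [hLHS]
  set S : ℝ := (1 / (N : ℝ)) * ∑ j, v j ⬝ᵥ v j with hS
  have hlam_ge : αmin * S / k ≤ lam := by
    rw [div_le_iff₀ hkpos] at *
    nlinarith [le_trans htr_ge htr_le]
  have : (1 - αmin / (k:ℝ)) * S = S - αmin * S / k := by ring
  rw [this]
  linarith
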